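/- Assume X_1,…,X_n are i.i.d. Bernoulli(1/2) and Y_k = X_k ⊕ V_k, with V_1,…,V_n i.i.d. Bernoulli(α) independent of X^n, where α ∈ (0, 1/2). Let ε_L < 1−α be such that h̲_n(ε)^n = (ε^n − α^n)/((1−α)^n − α^n) for all ε ∈ [ε_L, 1−α] (such ε_L exists). Then for every n ≥ 1 and every ε ∈ [ε_L, 1−α]: h_n^i(ε) ≤ h̲_n(ε) ≤ h_n^i(ε) + α/(2(1−α)). -/

import Mathlib

open Finset

/-- `bern p b = p` if `b = true`, and `1 - p` otherwise. -/
noncomputable def bern (p : ℝ) (b : Bool) : ℝ := if b then p else 1 - p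

/-- Joint pmf of `(X^n, Y^n)` where `X_1,…,X_n` are i.i.d. `Bernoulli(p)` and
`Y_k = X_k ⊕ V_k` with `V_1,…,V_n` i.i.d. `Bernoulli(α)` independent of `X^n`. -/
noncomputable def jointIID (n : ℕ) (p α : ℝ) :
    (Fin n → Bool) → (Fin n → Bool) → ℝ :=
  fun x y => ∏ k, bern p (x k) * bern α (xor (x k) (y k))

/-- `F` is a channel (row-stochastic matrix) on a finite alphabet. -/
def IsChannel {V : Type*} [Fintype V] (F : V → V → ℝ) : Prop :=
  (∀ y z, 0 ≤ F y z) ∧ ∀ y, ∑ z, F y z = 1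

/-- `P_c(X|Z)` where `Z` is the output of the channel `F` applied to `Y` and
`X – Y – Z` is a Markov chain, for joint pmf `P` of `(X,Y)`. -/
noncomputable def pcXZ {X V : Type*} [Fintype X] [Fintype V] [Nonempty X]
    (P : X → V → ℝ) (F : V → V → ℝ) : ℝ :=
  ∑ z, ⨆ x, ∑ y, P x y * F y z

/-- `P_c(Y|Z)` where `Z` is the output of the channel `F` applied to `Y`. -/
noncomputable def pcYZ {X V : Type*} [Fintype X] [Fintype V] [Nonempty V]
    (P : X → V → ℝ) (F : V → V → ℝ) : ℝ :=
  ∑ z, ⨆ y, (∑ x, P x y) * F y z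

/-- The Z-channel from `y0` to `z0` with crossover probability `ζ`: every `y ≠ y0` is
mapped to itself with probability `1`, while `y0` is mapped to `z0` with probability
`ζ` and to itself with probability `1 − ζ`. -/
noncomputable def Zch {V : Type*} [DecidableEq V] (y0 z0 : V) (ζ : ℝ) : V → V → ℝ :=
  fun y z =>
    if y = y0 then (if z = z0 then ζ else if z = y0 then 1 - ζ else 0)
    else (if z = y then 1 else 0)

/-- The memoryless privacy filter built from a single binary-input binary-output
channel `W`. -/
noncomputable def memless (n : ℕ) (W : Bool → Bool → ℝ) :
    (Fin n → Bool) → (Fin n → Bool) → ℝ :=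
  fun y z => ∏ k, W (y k) (z k)

/-- `h_n^i(ε)`: the best normalized guessing probability `P_c(Y^n|Z^n)^{1/n}` over
memoryless privacy filters satisfying `P_c(X^n|Z^n)^{1/n} ≤ ε`. -/
noncomputable def hMemless (n : ℕ) (p α : ℝ) (ε : ℝ) : ℝ :=
  sSup {u | ∃ W : Bool → Bool → ℝ, (∀ y z, 0 ≤ W y z) ∧ (∀ y, ∑ z, W y z = 1) ∧
    pcXZ (jointIID n p α) (memless n W) ^ ((n : ℝ)⁻¹) ≤ ε ∧
    u = pcYZ (jointIID n p α) (memless n W) ^ ((n : ℝ)⁻¹)}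

/-- `h̲_n(ε)`: the best normalized guessing probability `P_c(Y^n|Z^n)^{1/n}` over all
channels with output alphabet `{0,1}^n` satisfying `P_c(X^n|Z^n)^{1/n} ≤ ε`. -/
noncomputable def hUnderN (n : ℕ) (p α : ℝ) (ε : ℝ) : ℝ :=
  sSup {u | ∃ F : (Fin n → Bool) → (Fin n → Bool) → ℝ, IsChannel F ∧
    pcXZ (jointIID n p α) F ^ ((n : ℝ)⁻¹) ≤ ε ∧
    u = pcYZ (jointIID n p α) F ^ ((n : ℝ)⁻¹)}

section Helpers

lemma sum_pi_prod {n : ℕ} (f : Fin n → Bool → ℝ) :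
    ∑ g : Fin n → Bool, ∏ k, f k (g k) = ∏ k, ∑ b, f k b := by
  rw [Finset.prod_univ_sum (fun _ => (univ : Finset Bool)) f, Fintype.piFinset_univ]

lemma sup_pi_prod {n : ℕ} (f : Fin n → Bool → ℝ) (hf : ∀ k b, 0 ≤ f k b) :
    ⨆ g : Fin n → Bool, ∏ k, f k (g k) = ∏ k, max (f k false) (f k true) := by
  apply le_antisymm
  · refine ciSup_le fun g => Finset.prod_le_prod (fun k _ => hf k (g k)) (fun k _ => ?_)
    cases hg : g k
    · exact le_max_left _ _
    · exact le_max_right _ _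
  · have h : ∏ k, max (f k false) (f k true)
        = ∏ k, f k (decide (f k false ≤ f k true)) := by
      refine Finset.prod_congr rfl fun k _ => ?_
      by_cases h : f k false ≤ f k true
      · simp [h, max_eq_right h]
      · simp [h, max_eq_left (le_of_not_ge h)]
    rw [h]
    exact le_ciSup (Set.Finite.bddAbove
      (Set.finite_range (fun g : Fin n → Bool => ∏ k, f k (g k)))) _

lemma sup_le_sum {ι : Type*} [Fintype ι] [Nonempty ι] (f : ι → ℝ) (hf : ∀ i, 0 ≤ f i) :
    ⨆ i, f i ≤ ∑ i, f i :=
  ciSup_le fun i => Finset.single_le_sum (fun j _ => hf j) (mem_univ i)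

lemma sum_le_card_mul_sup {ι : Type*} [Fintype ι] [Nonempty ι] (f : ι → ℝ) :
    ∑ i, f i ≤ (Fintype.card ι : ℝ) * ⨆ i, f i := by
  calc ∑ i, f i ≤ ∑ _i : ι, ⨆ j, f j :=
        Finset.sum_le_sum fun i _ => le_ciSup (Set.Finite.bddAbove (Set.finite_range f)) i
    _ = (Fintype.card ι : ℝ) * ⨆ j, f j := by
        rw [Finset.sum_const, Finset.card_univ, nsmul_eq_mul]

lemma bern_nonneg {p : ℝ} (h0 : 0 ≤ p) (h1 : p ≤ 1) (b : Bool) : 0 ≤ bern p b := by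
  unfold bern; cases b <;> simp <;> linarith

lemma jointIID_nonneg {n : ℕ} {α : ℝ} (h0 : 0 ≤ α) (h1 : α ≤ 1) (x y : Fin n → Bool) :
    0 ≤ jointIID n (1/2) α x y :=
  Finset.prod_nonneg fun k _ =>
    mul_nonneg (bern_nonneg (by norm_num) (by norm_num) _) (bern_nonneg h0 h1 _)

lemma jointIID_margY {n : ℕ} {α : ℝ} (y : Fin n → Bool) :
    ∑ x, jointIID n (1/2) α x y = (2⁻¹ : ℝ) ^ n := by
  unfold jointIID
  rw [sum_pi_prod (fun k b => bern (1/2) b * bern α (xor b (y k)))]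
  rw [show ∏ k, (∑ b, bern (1/2) b * bern α (xor b (y k))) = ∏ _k : Fin n, (2⁻¹ : ℝ) from
    Finset.prod_congr rfl fun k _ => by
      cases y k <;> simp [bern, Fintype.sum_bool] <;> ring]
  simp

lemma jointIID_total {n : ℕ} {α : ℝ} :
    ∑ y, ∑ x, jointIID n (1/2) α x y = 1 := by
  rw [Finset.sum_congr rfl fun y _ => jointIID_margY y]
  rw [Finset.sum_const, Finset.card_univ, nsmul_eq_mul]
  rw [show (Fintype.card (Fin n → Bool) : ℝ) = 2 ^ n by simp]
  rw [← mul_pow]; norm_num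

section PC
variable {Xt Vt : Type*} [Fintype Xt] [Fintype Vt] [Nonempty Xt] [Nonempty Vt]

lemma pcYZ_nonneg (P : Xt → Vt → ℝ) (F : Vt → Vt → ℝ) (hP : ∀ x y, 0 ≤ P x y)
    (hF : ∀ y z, 0 ≤ F y z) : 0 ≤ pcYZ P F := by
  refine Finset.sum_nonneg fun z _ => ?_
  obtain ⟨y⟩ := ‹Nonempty Vt›
  exact le_trans (mul_nonneg (Finset.sum_nonneg fun x _ => hP x y) (hF y z))
    (le_ciSup (Set.Finite.bddAbove
      (Set.finite_range (fun y => (∑ x, P x y) * F y z))) y)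

lemma pcYZ_le_one (P : Xt → Vt → ℝ) (F : Vt → Vt → ℝ) (hP : ∀ x y, 0 ≤ P x y)
    (hF : ∀ y z, 0 ≤ F y z) (hFr : ∀ y, ∑ z, F y z = 1)
    (hPt : ∑ y, ∑ x, P x y = 1) : pcYZ P F ≤ 1 := by
  unfold pcYZ
  calc ∑ z, ⨆ y, (∑ x, P x y) * F y z ≤ ∑ z, ∑ y, (∑ x, P x y) * F y z :=
        Finset.sum_le_sum fun z _ => sup_le_sum _
          (fun y => mul_nonneg (Finset.sum_nonneg fun x _ => hP x y) (hF y z))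
    _ = ∑ y, (∑ x, P x y) * ∑ z, F y z := by
        rw [Finset.sum_comm]; exact Finset.sum_congr rfl fun y _ => by rw [Finset.mul_sum]
    _ = 1 := by simp only [hFr, mul_one]; exact hPt

lemma one_le_card_mul_pcXZ (P : Xt → Vt → ℝ) (F : Vt → Vt → ℝ)
    (hFr : ∀ y, ∑ z, F y z = 1) (hPt : ∑ x, ∑ y, P x y = 1) :
    1 ≤ (Fintype.card Xt : ℝ) * pcXZ P F := by
  unfold pcXZ
  have h1 : ∑ z, ∑ x, ∑ y, P x y * F y z = 1 := by
    calc ∑ z, ∑ x, ∑ y, P x y * F y z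
        = ∑ x, ∑ y, ∑ z, P x y * F y z := by
          rw [Finset.sum_comm]
          exact Finset.sum_congr rfl fun x _ => Finset.sum_comm
      _ = ∑ x, ∑ y, P x y * ∑ z, F y z := by
          exact Finset.sum_congr rfl fun x _ => Finset.sum_congr rfl fun y _ => by
            rw [Finset.mul_sum]
      _ = 1 := by simp only [hFr, mul_one]; exact hPt
  calc (1 : ℝ) = ∑ z, ∑ x, ∑ y, P x y * F y z := h1.symm
    _ ≤ ∑ z, (Fintype.card Xt : ℝ) * ⨆ x, ∑ y, P x y * F y z :=
        Finset.sum_le_sum fun z _ => sum_le_card_mul_sup _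
    _ = (Fintype.card Xt : ℝ) * ∑ z, ⨆ x, ∑ y, P x y * F y z := by rw [Finset.mul_sum]

end PC

/-- per-letter conditional `(X,Z)` weight -/
noncomputable def Ax (α : ℝ) (W : Bool → Bool → ℝ) (x z : Bool) : ℝ :=
  ∑ b, bern (1/2) x * bern α (xor x b) * W b z

lemma Ax_nonneg {α : ℝ} {W : Bool → Bool → ℝ} (h0 : 0 ≤ α) (h1 : α ≤ 1)
    (hW : ∀ b z, 0 ≤ W b z) (x z : Bool) : 0 ≤ Ax α W x z :=
  Finset.sum_nonneg fun b _ => mul_nonneg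
    (mul_nonneg (bern_nonneg (by norm_num) (by norm_num) _) (bern_nonneg h0 h1 _)) (hW b z)

lemma pcXZ_memless (n : ℕ) (α : ℝ) (W : Bool → Bool → ℝ) (h0 : 0 ≤ α) (h1 : α ≤ 1)
    (hW : ∀ b z, 0 ≤ W b z) :
    pcXZ (jointIID n (1/2) α) (memless n W)
      = (max (Ax α W false false) (Ax α W true false)
          + max (Ax α W false true) (Ax α W true true)) ^ n := by
  unfold pcXZ
  have step1 : ∀ z x : Fin n → Bool,
      ∑ y, jointIID n (1/2) α x y * memless n W y z = ∏ k, Ax α W (x k) (z k) := by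
    intro z x
    unfold jointIID memless
    calc ∑ y : Fin n → Bool,
          (∏ k, bern (1/2) (x k) * bern α (xor (x k) (y k))) * ∏ k, W (y k) (z k)
        = ∑ y : Fin n → Bool,
            ∏ k, bern (1/2) (x k) * bern α (xor (x k) (y k)) * W (y k) (z k) :=
          Finset.sum_congr rfl fun y _ => by rw [← Finset.prod_mul_distrib]
      _ = ∏ k, ∑ b, bern (1/2) (x k) * bern α (xor (x k) b) * W b (z k) :=
          sum_pi_prod (fun k b => bern (1/2) (x k) * bern α (xor (x k) b) * W b (z k))
      _ = ∏ k, Ax α W (x k) (z k) := rfl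
  have step2 : ∀ z : Fin n → Bool,
      (⨆ x, ∑ y, jointIID n (1/2) α x y * memless n W y z)
        = ∏ k, max (Ax α W false (z k)) (Ax α W true (z k)) := by
    intro z
    rw [iSup_congr (step1 z)]
    exact sup_pi_prod (fun k b => Ax α W b (z k)) (fun k b => Ax_nonneg h0 h1 hW _ _)
  rw [Finset.sum_congr rfl fun z _ => step2 z]
  rw [sum_pi_prod (fun k b => max (Ax α W false b) (Ax α W true b))]
  simp only [Fintype.sum_bool]
  rw [Finset.prod_const, Finset.card_univ, Fintype.card_fin, add_comm]

lemma pcYZ_memless (n : ℕ) (α : ℝ) (W : Bool → Bool → ℝ) (hW : ∀ b z, 0 ≤ W b z) :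
    pcYZ (jointIID n (1/2) α) (memless n W)
      = (max (2⁻¹ * W false false) (2⁻¹ * W true false)
          + max (2⁻¹ * W false true) (2⁻¹ * W true true)) ^ n := by
  unfold pcYZ
  have step1 : ∀ z y : Fin n → Bool,
      (∑ x, jointIID n (1/2) α x y) * memless n W y z
        = ∏ k, ((2⁻¹ : ℝ) * W (y k) (z k)) := by
    intro z y
    rw [jointIID_margY]
    unfold memless
    rw [show ((2 : ℝ)⁻¹) ^ n = ∏ _k : Fin n, (2⁻¹ : ℝ) by
      rw [Finset.prod_const, Finset.card_univ, Fintype.card_fin]]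
    rw [← Finset.prod_mul_distrib]
  have step2 : ∀ z : Fin n → Bool,
      (⨆ y, (∑ x, jointIID n (1/2) α x y) * memless n W y z)
        = ∏ k, max ((2⁻¹ : ℝ) * W false (z k)) ((2⁻¹ : ℝ) * W true (z k)) := by
    intro z
    rw [iSup_congr (step1 z)]
    exact sup_pi_prod (fun k b => (2⁻¹ : ℝ) * W b (z k))
      (fun k b => mul_nonneg (by norm_num) (hW _ _))
  rw [Finset.sum_congr rfl fun z _ => step2 z]
  rw [sum_pi_prod (fun k b => max ((2⁻¹ : ℝ) * W false b) ((2⁻¹ : ℝ) * W true b))]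
  simp only [Fintype.sum_bool]
  rw [Finset.prod_const, Finset.card_univ, Fintype.card_fin, add_comm]

/-- the binary Z-channel used as witness -/
noncomputable def Wz (ζ : ℝ) : Bool → Bool → ℝ :=
  fun y z => if y then (if z then 1 else 0) else (if z then ζ else 1 - ζ)

end Helpers
lemma Wz_nonneg {ζ : ℝ} (h0 : 0 ≤ ζ) (h1 : ζ ≤ 1) : ∀ b z, 0 ≤ Wz ζ b z := by
  intro b z; unfold Wz; cases b <;> cases z <;> simp <;> linarith

lemma Wz_row {ζ : ℝ} : ∀ y, ∑ z, Wz ζ y z = 1 := by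
  intro y; rw [Fintype.sum_bool]; unfold Wz; cases y <;> simp

lemma Ax_ff {α ζ : ℝ} : Ax α (Wz ζ) false false = (1-α)*(1-ζ)/2 := by
  simp [Ax, Wz, bern, Fintype.sum_bool]; ring

lemma Ax_tf {α ζ : ℝ} : Ax α (Wz ζ) true false = α*(1-ζ)/2 := by
  simp [Ax, Wz, bern, Fintype.sum_bool]; ring

lemma Ax_ft {α ζ : ℝ} : Ax α (Wz ζ) false true = ((1-α)*ζ + α)/2 := by
  simp [Ax, Wz, bern, Fintype.sum_bool]; ring

lemma Ax_tt {α ζ : ℝ} : Ax α (Wz ζ) true true = (α*ζ + (1-α))/2 := by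
  simp [Ax, Wz, bern, Fintype.sum_bool]; ring

set_option maxHeartbeats 2000000 in
theorem gap_upper_bound_uniform (α : ℝ) (hα : α ∈ Set.Ioo (0 : ℝ) (1 / 2))
    (εL : ℕ → ℝ)
    (hεL : ∀ n, 0 < n → εL n < 1 - α ∧
      ∀ ε ∈ Set.Icc (εL n) (1 - α),
        hUnderN n (1 / 2) α ε ^ n = (ε ^ n - α ^ n) / ((1 - α) ^ n - α ^ n)) :
    ∀ n, 1 ≤ n → ∀ ε ∈ Set.Icc (εL n) (1 - α),
      hMemless n (1 / 2) α ε ≤ hUnderN n (1 / 2) α ε ∧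
      hUnderN n (1 / 2) α ε ≤ hMemless n (1 / 2) α ε + α / (2 * (1 - α)) := by
  obtain ⟨hα0, hα2⟩ := hα
  intro n hn ε hε
  have hn0 : n ≠ 0 := by omega
  have hnpos : 0 < n := hn
  obtain ⟨hεLlt, hform⟩ := hεL n hnpos
  have h1a : (0:ℝ) < 1 - α := by linarith
  have h12 : (0:ℝ) < 1 - 2*α := by linarith
  have hα1 : α ≤ 1 := by linarith
  have hD : (0:ℝ) < (1-α)^n - α^n := by
    have := pow_lt_pow_left₀ (show α < 1 - α by linarith) hα0.le hn0
    linarith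
  -- Step 1: εL n ≥ 1/2
  have key : ∀ ε', εL n ≤ ε' → 0 ≤ ε' → ε' < 1/2 → ε' = α := by
    intro ε' h1 h2 h3
    have hIcc : ε' ∈ Set.Icc (εL n) (1 - α) := ⟨h1, by linarith⟩
    have hempty : ∀ u : ℝ, ¬ (∃ F : (Fin n → Bool) → (Fin n → Bool) → ℝ, IsChannel F ∧
        pcXZ (jointIID n (1/2) α) F ^ ((n : ℝ)⁻¹) ≤ ε' ∧
        u = pcYZ (jointIID n (1/2) α) F ^ ((n : ℝ)⁻¹)) := by
      rintro u ⟨F, ⟨hFnn, hFr⟩, hcon, rfl⟩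
      have htot : ∑ x, ∑ y, jointIID n (1/2) α x y = 1 := by
        rw [Finset.sum_comm]; exact jointIID_total
      have hge := one_le_card_mul_pcXZ (jointIID n (1/2) α) F hFr htot
      rw [show (Fintype.card (Fin n → Bool) : ℝ) = 2 ^ n by simp] at hge
      have h2n : (0:ℝ) < 2 ^ n := by positivity
      have hpc : (2⁻¹:ℝ) ^ n ≤ pcXZ (jointIID n (1/2) α) F := by
        rw [inv_pow, inv_eq_one_div, div_le_iff₀ h2n]
        nlinarith [hge]
      have h5 := Real.rpow_le_rpow (by positivity) hpc
        (by positivity : (0:ℝ) ≤ (n:ℝ)⁻¹)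
      rw [Real.pow_rpow_inv_natCast (by norm_num) hn0] at h5
      have h6 : (2⁻¹:ℝ) ≤ ε' := le_trans h5 hcon
      norm_num at h6; linarith
    have h0 : hUnderN n (1/2) α ε' = 0 := by
      unfold hUnderN
      exact le_antisymm (Real.sSup_le (fun u hu => absurd hu (hempty u)) le_rfl)
        (Real.sSup_nonneg (fun u hu => absurd hu (hempty u)))
    have hf := hform ε' hIcc
    rw [h0, zero_pow hn0] at hf
    have hpow : ε' ^ n = α ^ n := by
      rcases div_eq_zero_iff.mp hf.symm with h | h
      · linarith
      · linarith
    exact le_antisymm ((pow_le_pow_iff_left₀ h2 hα0.le hn0).mp hpow.le)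
      ((pow_le_pow_iff_left₀ hα0.le h2 hn0).mp hpow.ge)
  have hhalf : (1:ℝ)/2 ≤ εL n := by
    by_contra hcon
    push_neg at hcon
    set m := max (εL n) 0 with hm
    have hmlt : m < 1/2 := max_lt hcon (by norm_num)
    have hm0 : (0:ℝ) ≤ m := le_max_right _ _
    have hmεL : εL n ≤ m := le_max_left _ _
    set d := (1/2 - m)/3 with hd
    have hdpos : 0 < d := by rw [hd]; linarith
    have e1 := key (m + d) (by linarith) (by linarith) (by rw [hd]; linarith)
    have e2 := key (m + 2*d) (by linarith) (by linarith) (by rw [hd]; linarith)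
    linarith
  have hε1 : εL n ≤ ε := hε.1
  have hεub : ε ≤ 1 - α := hε.2
  have hεhalf : (1:ℝ)/2 ≤ ε := le_trans hhalf hε1
  have hε0 : (0:ℝ) ≤ ε := by linarith
  -- Step 2: the Z-channel witness
  set ζ := 2*(1-α-ε)/(1-2*α) with hζ
  have hζ0 : 0 ≤ ζ := div_nonneg (by linarith) h12.le
  have hζ1 : ζ ≤ 1 := by rw [hζ, div_le_one h12]; linarith
  have hWnn := Wz_nonneg hζ0 hζ1
  have hWr : ∀ y, ∑ z, Wz ζ y z = 1 := Wz_row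
  have hζden : ζ * (1-2*α) = 2*(1-α-ε) := by
    rw [hζ]; field_simp
  have hbaseX : max (Ax α (Wz ζ) false false) (Ax α (Wz ζ) true false)
      + max (Ax α (Wz ζ) false true) (Ax α (Wz ζ) true true) = ε := by
    rw [Ax_ff, Ax_tf, Ax_ft, Ax_tt]
    rw [max_eq_left (by nlinarith), max_eq_right (by nlinarith)]
    nlinarith [hζden]
  have hpcX : pcXZ (jointIID n (1/2) α) (memless n (Wz ζ)) = ε ^ n := by
    rw [pcXZ_memless n α (Wz ζ) hα0.le hα1 hWnn, hbaseX]
  set u₀ : ℝ := (ε - α)/(1 - 2*α) with hu₀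
  have hu₀0 : 0 ≤ u₀ := div_nonneg (by linarith) h12.le
  have hu₀den : u₀ * (1-2*α) = ε - α := by rw [hu₀]; exact div_mul_cancel₀ _ h12.ne'
  have hbaseY : max (2⁻¹ * Wz ζ false false) (2⁻¹ * Wz ζ true false)
      + max (2⁻¹ * Wz ζ false true) (2⁻¹ * Wz ζ true true) = u₀ := by
    simp only [Wz, if_true, if_false, Bool.false_eq_true, ite_true, ite_false]
    rw [max_eq_left (by linarith), max_eq_right (by linarith)]
    nlinarith [hζden, hu₀den]
  have hpcY : pcYZ (jointIID n (1/2) α) (memless n (Wz ζ)) = u₀ ^ n := by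
    rw [pcYZ_memless n α (Wz ζ) hWnn, hbaseY]
  -- memberships and bounds
  have hmemb : u₀ ∈ {u | ∃ W : Bool → Bool → ℝ, (∀ y z, 0 ≤ W y z) ∧
      (∀ y, ∑ z, W y z = 1) ∧
      pcXZ (jointIID n (1/2) α) (memless n W) ^ ((n : ℝ)⁻¹) ≤ ε ∧
      u = pcYZ (jointIID n (1/2) α) (memless n W) ^ ((n : ℝ)⁻¹)} := by
    refine ⟨Wz ζ, hWnn, hWr, ?_, ?_⟩
    · rw [hpcX, Real.pow_rpow_inv_natCast hε0 hn0]
    · rw [hpcY, Real.pow_rpow_inv_natCast hu₀0 hn0]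
  have hsub : {u | ∃ W : Bool → Bool → ℝ, (∀ y z, 0 ≤ W y z) ∧
      (∀ y, ∑ z, W y z = 1) ∧
      pcXZ (jointIID n (1/2) α) (memless n W) ^ ((n : ℝ)⁻¹) ≤ ε ∧
      u = pcYZ (jointIID n (1/2) α) (memless n W) ^ ((n : ℝ)⁻¹)} ⊆
      {u | ∃ F : (Fin n → Bool) → (Fin n → Bool) → ℝ, IsChannel F ∧
      pcXZ (jointIID n (1/2) α) F ^ ((n : ℝ)⁻¹) ≤ ε ∧
      u = pcYZ (jointIID n (1/2) α) F ^ ((n : ℝ)⁻¹)} := by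
    rintro u ⟨W', hWnn', hWr', hcon', rfl⟩
    refine ⟨memless n W', ⟨fun y z => Finset.prod_nonneg fun k _ => hWnn' _ _, ?_⟩,
      hcon', rfl⟩
    intro y
    unfold memless
    rw [sum_pi_prod (fun k b => W' (y k) b)]
    exact Finset.prod_eq_one fun k _ => hWr' (y k)
  have hbdd : BddAbove {u | ∃ F : (Fin n → Bool) → (Fin n → Bool) → ℝ, IsChannel F ∧
      pcXZ (jointIID n (1/2) α) F ^ ((n : ℝ)⁻¹) ≤ ε ∧
      u = pcYZ (jointIID n (1/2) α) F ^ ((n : ℝ)⁻¹)} := by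
    refine ⟨1, ?_⟩
    rintro u ⟨F, ⟨hFnn, hFr⟩, _, rfl⟩
    exact Real.rpow_le_one (pcYZ_nonneg _ _ (jointIID_nonneg hα0.le hα1) hFnn)
      (pcYZ_le_one _ _ (jointIID_nonneg hα0.le hα1) hFnn hFr jointIID_total)
      (by positivity)
  constructor
  · exact csSup_le_csSup hbdd ⟨u₀, hmemb⟩ hsub
  · have hmem_ge : u₀ ≤ hMemless n (1/2) α ε := le_csSup (hbdd.mono hsub) hmemb
    have hU0 : 0 ≤ hUnderN n (1/2) α ε := by
      refine Real.sSup_nonneg ?_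
      rintro u ⟨F, ⟨hFnn, hFr⟩, _, rfl⟩
      exact Real.rpow_nonneg (pcYZ_nonneg _ _ (jointIID_nonneg hα0.le hα1) hFnn) _
    have hfe := hform ε hε
    have hUb : hUnderN n (1/2) α ε ≤ ε / (1-α) := by
      have hdnn : (0:ℝ) ≤ ε / (1-α) := div_nonneg hε0 h1a.le
      refine (pow_le_pow_iff_left₀ hU0 hdnn hn0).mp ?_
      rw [hfe, div_pow, div_le_div_iff₀ hD (pow_pos h1a n)]
      have hεn : ε ^ n ≤ (1-α) ^ n := pow_le_pow_left₀ hε0 hεub n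
      have hαn : (0:ℝ) ≤ α ^ n := pow_nonneg hα0.le n
      nlinarith
    have halg : ε / (1-α) ≤ u₀ + α / (2*(1-α)) := by
      have hid : u₀ + α/(2*(1-α)) - ε/(1-α) = α*(2*ε-1)/(2*(1-α)*(1-2*α)) := by
        rw [hu₀, div_add_div _ _ h12.ne' (mul_ne_zero two_ne_zero h1a.ne'),
          div_sub_div _ _ (mul_ne_zero h12.ne' (mul_ne_zero two_ne_zero h1a.ne')) h1a.ne',
          div_eq_div_iff (mul_ne_zero (mul_ne_zero h12.ne' (mul_ne_zero two_ne_zero h1a.ne')) h1a.ne')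
            (mul_ne_zero (mul_ne_zero two_ne_zero h1a.ne') h12.ne')]; ring
      have hpos : 0 ≤ α*(2*ε-1)/(2*(1-α)*(1-2*α)) :=
        div_nonneg (mul_nonneg hα0.le (by linarith)) (by positivity)
      linarith
    linarith
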